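/- The braided ASEP jump rates satisfy the recurrence: for all integers m, k2, all integers k1 ≥ 1, and all integers 0 ≤ l2 ≤ k1, p_m(k1,k2;l2) = q^{2(m−k2−k1+l2)} · p_m(k1−1, k2; l2−1) + (1 − q^{2(m−k2−k1+l2+1)}) · p_m(k1−1, k2; l2). -/

import Mathlib

open BigOperators Finset

noncomputable section

namespace Stmt10

/-- The `q²`-deformed integer `[n]_{q²} = (1 − q^{2n})/(1 − q²)`. -/
def qInt (q : ℝ) (n : ℕ) : ℝ := (1 - q ^ (2 * n)) / (1 - q ^ 2)

/-- The `q²`-deformed factorial `[n]_{q²}! = [1]_{q²} ⋯ [n]_{q²}`, with `[0]_{q²}! = 1`. -/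
def qFact (q : ℝ) : ℕ → ℝ
  | 0 => 1
  | n + 1 => qFact q n * qInt q (n + 1)

/-- The `q²`-deformed binomial coefficient, equal to `0` when `k > n`. -/
def qBinom (q : ℝ) (n k : ℕ) : ℝ :=
  if k ≤ n then qFact q n / (qFact q k * qFact q (n - k)) else 0

/-- The Pochhammer symbol `(a;p)_n = ∏_{i=0}^{n−1} (1 − a pⁱ)`, with `(a;p)_0 = 1`. -/
def qPoch (a p : ℝ) (n : ℕ) : ℝ := ∏ i ∈ Finset.range n, (1 - a * p ^ i)

/-- The braided ASEP jump rate
`p_m(k1,k2;l2) = binom_{q²}(k1,l2) (q^{2(m−k2)};q^{−2})_{k1−l2} q^{2(m−k2−k1+l2)l2}`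
when `0 ≤ l2 ≤ k1`, and `0` otherwise.  Here `m, k2, l2` range over the integers
and `k1` over the naturals. -/
def pRate (q : ℝ) (m k2 : ℤ) (k1 : ℕ) (l2 : ℤ) : ℝ :=
  if 0 ≤ l2 ∧ l2 ≤ (k1 : ℤ) then
    qBinom q k1 l2.toNat *
      qPoch (q ^ ((2 : ℤ) * (m - k2))) (q ^ ((-2 : ℤ))) (k1 - l2.toNat) *
      q ^ ((2 : ℤ) * (m - k2 - (k1 : ℤ) + l2) * l2)
  else 0

variable {q : ℝ}

lemma qFact_zero : qFact q 0 = 1 := rfl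
lemma qFact_succ (n : ℕ) : qFact q (n+1) = qFact q n * qInt q (n+1) := rfl

lemma h2pos (hq0 : 0 < q) (hq1 : q < 1) : 0 < 1 - q ^ 2 := by
  have := pow_lt_one₀ hq0.le hq1 (two_ne_zero); linarith

lemma qInt_pos (hq0 : 0 < q) (hq1 : q < 1) (n : ℕ) (hn : n ≠ 0) : 0 < qInt q n := by
  have h1 : q ^ (2*n) < 1 := pow_lt_one₀ hq0.le hq1 (by omega)
  exact div_pos (by linarith) (h2pos hq0 hq1)

lemma qFact_pos (hq0 : 0 < q) (hq1 : q < 1) (n : ℕ) : 0 < qFact q n := by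
  induction n with
  | zero => norm_num [qFact_zero]
  | succ n ih => exact mul_pos ih (qInt_pos hq0 hq1 (n+1) (by omega))

lemma qInt_add (hq0 : 0 < q) (hq1 : q < 1) (a b : ℕ) :
    qInt q (a + b) = qInt q a + q ^ (2*a) * qInt q b := by
  have h2 : (1 - q ^ 2) ≠ 0 := (h2pos hq0 hq1).ne'
  unfold qInt
  field_simp
  ring

lemma qBinom_zero (hq0 : 0 < q) (hq1 : q < 1) (n : ℕ) : qBinom q n 0 = 1 := by
  rw [qBinom, if_pos (Nat.zero_le n), qFact_zero, one_mul, Nat.sub_zero,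
    div_self (qFact_pos hq0 hq1 n).ne']

lemma qBinom_self (hq0 : 0 < q) (hq1 : q < 1) (n : ℕ) : qBinom q n n = 1 := by
  rw [qBinom, if_pos le_rfl, Nat.sub_self, qFact_zero, mul_one,
    div_self (qFact_pos hq0 hq1 n).ne']

lemma qBinom_rec (hq0 : 0 < q) (hq1 : q < 1) (n k : ℕ) (hk : k + 1 ≤ n + 1) :
    qBinom q (n+1) (k+1) = qBinom q n k + q ^ (2*(k+1)) * qBinom q n (k+1) := by
  rcases Nat.lt_or_ge k n with h | h
  · have hkn : k + 1 ≤ n := h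
    have e1 : n - k = (n - k - 1) + 1 := by omega
    have e2 : n + 1 - (k+1) = (n - k - 1) + 1 := by omega
    have e3 : n - (k+1) = n - k - 1 := by omega
    rw [qBinom, qBinom, qBinom, if_pos (by omega), if_pos (by omega), if_pos (by omega),
      e2, e3, e1]
    have hsplit : qInt q (n+1) = qInt q (k+1) + q ^ (2*(k+1)) * qInt q (n - k - 1 + 1) := by
      have : n + 1 = (k+1) + (n - k - 1 + 1) := by omega
      rw [this, qInt_add hq0 hq1]
    show qFact q n * qInt q (n+1) / (qFact q (k+1) * _) = _
    rw [hsplit]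
    have hFk : qFact q k ≠ 0 := (qFact_pos hq0 hq1 k).ne'
    have hFn : qFact q (n-k-1) ≠ 0 := (qFact_pos hq0 hq1 _).ne'
    have hIk : qInt q (k+1) ≠ 0 := (qInt_pos hq0 hq1 _ (by omega)).ne'
    have hIn : qInt q (n-k-1+1) ≠ 0 := (qInt_pos hq0 hq1 _ (by omega)).ne'
    show qFact q n * _ / ((qFact q k * qInt q (k+1)) * (qFact q (n-k-1) * qInt q (n-k-1+1)))
      = qFact q n / (qFact q k * (qFact q (n-k-1) * qInt q (n-k-1+1)))
      + q^(2*(k+1)) * (qFact q n / ((qFact q k * qInt q (k+1)) * qFact q (n-k-1)))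
    field_simp
  · have : k = n := by omega
    subst this
    rw [qBinom, qBinom, qBinom, if_pos le_rfl, if_pos le_rfl, if_neg (by omega)]
    rw [Nat.sub_self, Nat.sub_self, qFact_zero, mul_one, mul_one,
      div_self (qFact_pos hq0 hq1 (k+1)).ne', div_self (qFact_pos hq0 hq1 k).ne']
    ring

lemma qPoch_succ (a p : ℝ) (n : ℕ) : qPoch a p (n+1) = qPoch a p n * (1 - a * p ^ n) :=
  prod_range_succ _ _

lemma poch_step (hq : q ≠ 0) (m k2 : ℤ) (j : ℕ) :
    qPoch (q ^ ((2:ℤ)*(m-k2))) (q ^ ((-2:ℤ))) (j+1)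
      = qPoch (q ^ ((2:ℤ)*(m-k2))) (q ^ ((-2:ℤ))) j * (1 - q ^ ((2:ℤ)*(m - k2 - j))) := by
  have h : (q ^ ((2:ℤ)*(m-k2))) * (q ^ ((-2:ℤ))) ^ j = q ^ ((2:ℤ)*(m - k2 - j)) := by
    rw [← zpow_natCast (q ^ ((-2:ℤ))) j, ← zpow_mul, ← zpow_add₀ hq]
    congr 1
    push_cast
    ring
  rw [qPoch_succ, h]

lemma key_alg (hq : q ≠ 0) (B1 B2 P0 : ℝ) (c : ℤ) (j : ℕ) :
    (B1 + q^(2*(j+1)) * B2) * (P0 * (1 - q^((2:ℤ)*(c+1)))) * q^((2:ℤ)*c*(j+1))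
      = q^((2:ℤ)*c) * (B1 * (P0 * (1 - q^((2:ℤ)*(c+1)))) * q^((2:ℤ)*c*j))
        + (1 - q^((2:ℤ)*(c+1))) * (B2 * P0 * q^((2:ℤ)*(c+1)*(j+1))) := by
  have e1 : q ^ ((2:ℤ)*c*((j:ℤ)+1)) = q ^ ((2:ℤ)*c) * q ^ ((2:ℤ)*c*j) := by
    rw [← zpow_add₀ hq]; congr 1; ring
  have e2 : q ^ ((2:ℤ)*(c+1)*((j:ℤ)+1)) = q ^ (2*(j+1)) * q ^ ((2:ℤ)*c*((j:ℤ)+1)) := by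
    rw [← zpow_natCast q (2*(j+1)), ← zpow_add₀ hq]; congr 1; push_cast; ring
  rw [e2, e1]; ring

/-- **Recurrence for the braided ASEP jump rates** (Lemma 3.3 in the paper):
for all integers `m, k2`, all `k1 ≥ 1` and all `0 ≤ l2 ≤ k1`,
`p_m(k1,k2;l2) = q^{2(m−k2−k1+l2)} p_m(k1−1,k2;l2−1) + (1 − q^{2(m−k2−k1+l2+1)}) p_m(k1−1,k2;l2)`. -/
theorem braided_rate_recurrence (q : ℝ) (hq0 : 0 < q) (hq1 : q < 1)
    (m k2 : ℤ) (k1 : ℕ) (hk1 : 1 ≤ k1) (l2 : ℤ) (hl0 : 0 ≤ l2) (hl1 : l2 ≤ (k1 : ℤ)) :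
    pRate q m k2 k1 l2 =
      q ^ ((2 : ℤ) * (m - k2 - (k1 : ℤ) + l2)) * pRate q m k2 (k1 - 1) (l2 - 1) +
        (1 - q ^ ((2 : ℤ) * (m - k2 - (k1 : ℤ) + l2 + 1))) * pRate q m k2 (k1 - 1) l2 := by
  have hq : q ≠ 0 := hq0.ne'
  obtain ⟨n, rfl⟩ : ∃ n, k1 = n + 1 := ⟨k1 - 1, by omega⟩
  simp only [Nat.add_sub_cancel]
  rcases eq_or_lt_of_le hl0 with h0 | h0
  · -- l2 = 0
    subst h0
    simp only [pRate]
    rw [if_pos ⟨le_rfl, by positivity⟩, if_neg (by omega), if_pos ⟨le_rfl, by positivity⟩]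
    simp only [Int.toNat_zero, Nat.sub_zero, mul_zero, zpow_zero, mul_one]
    rw [qBinom_zero hq0 hq1, qBinom_zero hq0 hq1, one_mul, one_mul, poch_step hq]
    have : m - k2 - (n:ℤ) = m - k2 - (↑(n+1):ℤ) + 0 + 1 := by push_cast; ring
    rw [this]
    ring
  · -- l2 ≥ 1
    obtain ⟨j, rfl⟩ : ∃ j : ℕ, l2 = (j:ℤ) + 1 :=
      ⟨(l2 - 1).toNat, by omega⟩
    have hjn : (j:ℤ) + 1 ≤ (n:ℤ) + 1 := by push_cast at hl1; omega
    have hjn' : j ≤ n := by exact_mod_cast (by omega : (j:ℤ) ≤ n)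
    rcases Nat.lt_or_ge j n with hlt | hge
    · -- interior case: j + 1 ≤ n
      simp only [pRate]
      rw [if_pos ⟨by omega, by push_cast; omega⟩,
        if_pos ⟨by omega, by push_cast; omega⟩,
        if_pos ⟨by omega, by push_cast; omega⟩]
      have ht : ((j:ℤ) + 1).toNat = j + 1 := by omega
      have ht2 : ((j:ℤ) + 1 - 1).toNat = j := by omega
      have e3 : n - j = (n - j - 1) + 1 := by omega
      have e1 : n + 1 - (j+1) = (n - j - 1) + 1 := by omega
      have e2 : n - (j+1) = n - j - 1 := by omega
      rw [ht, ht2, e3, e1, e2, poch_step hq m k2 (n-j-1),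
        qBinom_rec hq0 hq1 n j (by omega)]
      have hnj : ((n - j - 1 : ℕ) : ℤ) = (n:ℤ) - j - 1 := by omega
      rw [show (2:ℤ) * (m - k2 - ↑(n - j - 1)) = 2*((m - k2 - (n:ℤ) + j)+1) by
            rw [hnj]; ring,
          show (2:ℤ) * (m - k2 - ↑(n + 1) + ((j:ℤ) + 1)) * ((j:ℤ) + 1)
              = 2*(m - k2 - (n:ℤ) + j)*((j:ℤ)+1) by push_cast; ring,
          show (2:ℤ) * (m - k2 - ↑(n + 1) + ((j:ℤ) + 1)) = 2*(m - k2 - (n:ℤ) + j) by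
            push_cast; ring,
          show (2:ℤ) * (m - k2 - (n:ℤ) + ((j:ℤ) + 1 - 1)) * ((j:ℤ) + 1 - 1)
              = 2*(m - k2 - (n:ℤ) + j)*(j:ℤ) by push_cast; ring,
          show (2:ℤ) * (m - k2 - ↑(n + 1) + ((j:ℤ) + 1) + 1) = 2*((m - k2 - (n:ℤ) + j)+1) by
            push_cast; ring,
          show (2:ℤ) * (m - k2 - (n:ℤ) + ((j:ℤ) + 1)) * ((j:ℤ) + 1)
              = 2*((m - k2 - (n:ℤ) + j)+1)*((j:ℤ)+1) by push_cast; ring]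
      exact key_alg hq _ _ _ (m - k2 - (n:ℤ) + j) j
    · -- j = n : l2 = k1
      have : j = n := by omega
      subst this
      simp only [pRate]
      rw [if_pos ⟨by omega, by push_cast; omega⟩,
        if_pos ⟨by omega, by push_cast; omega⟩,
        if_neg (by push_cast; omega)]
      have ht : ((j:ℤ) + 1).toNat = j + 1 := by omega
      have ht2 : ((j:ℤ) + 1 - 1).toNat = j := by omega
      rw [ht, ht2, Nat.sub_self, Nat.sub_self]
      simp only [qPoch, prod_range_zero]
      rw [qBinom_self hq0 hq1, qBinom_self hq0 hq1]
      simp only [one_mul, mul_one, mul_zero, add_zero]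
      rw [← zpow_add₀ hq]
      congr 1
      push_cast
      ring


end Stmt10

end
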